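/- Under the MIMO discrete-time adaptive law setup, the parameter increments are square-summable: ∑_{t=0}^{∞} ‖Θ(t+1) − Θ(t)‖² < ∞ and ∑_{t=0}^{∞} ‖Ψ(t+1) − Ψ(t)‖² < ∞ in the Frobenius norm (i.e. Θ(t+1) − Θ(t) ∈ L² and Ψ(t+1) − Ψ(t) ∈ L²). -/

import Mathlib

open Matrix BigOperators

section Aux

variable {M n : ℕ}

private lemma adaptive_dot_self_nonneg (x : Fin n → ℝ) : 0 ≤ x ⬝ᵥ x :=
  Finset.sum_nonneg fun i _ => mul_self_nonneg (x i)

private lemma adaptive_dot_self_pos {x : Fin n → ℝ} (hx : x ≠ 0) : 0 < x ⬝ᵥ x := by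
  obtain ⟨i, hi⟩ := Function.ne_iff.mp hx
  have h1 : 0 < x i * x i := mul_self_pos.mpr (by simpa using hi)
  have h2 : x i * x i ≤ ∑ j, x j * x j :=
    Finset.single_le_sum (fun j _ => mul_self_nonneg (x j)) (Finset.mem_univ i)
  exact lt_of_lt_of_le h1 h2

private lemma adaptive_trace_cross (P : Matrix (Fin M) (Fin M) ℝ) (A : Matrix (Fin M) (Fin n) ℝ)
    (v : Fin M → ℝ) (x : Fin n → ℝ) :
    Matrix.trace (Aᵀ * P * Matrix.vecMulVec v x) = ((Aᵀ * P) *ᵥ v) ⬝ᵥ x := by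
  rw [vecMulVec_eq Unit, ← Matrix.mul_assoc, ← Matrix.replicateCol_mulVec, trace_replicateCol_mul_replicateRow]

private lemma adaptive_trace_quad (P : Matrix (Fin M) (Fin M) ℝ) (v : Fin M → ℝ)
    (x : Fin n → ℝ) :
    Matrix.trace ((Matrix.vecMulVec v x)ᵀ * P * Matrix.vecMulVec v x)
      = (v ⬝ᵥ P *ᵥ v) * (x ⬝ᵥ x) := by
  rw [vecMulVec_eq Unit, Matrix.transpose_mul, Matrix.transpose_replicateCol, Matrix.transpose_replicateRow]
  rw [show Matrix.replicateCol Unit x * Matrix.replicateRow Unit v * P * (Matrix.replicateCol Unit v * Matrix.replicateRow Unit x)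
      = Matrix.replicateCol Unit x * (Matrix.replicateRow Unit v * (P * Matrix.replicateCol Unit v)) * Matrix.replicateRow Unit x by
    simp only [Matrix.mul_assoc]]
  rw [← Matrix.replicateCol_mulVec, Matrix.replicateRow_mul_replicateCol]
  rw [show (Matrix.of fun (_ _ : Unit) => v ⬝ᵥ P *ᵥ v) = (v ⬝ᵥ P *ᵥ v) • (1 : Matrix Unit Unit ℝ) by
    ext i j; simp [Matrix.one_apply, Subsingleton.elim i j]]
  rw [Matrix.mul_smul, Matrix.smul_mul, Matrix.mul_one, Matrix.trace_smul, trace_replicateCol_mul_replicateRow]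
  simp

private lemma adaptive_trace_expand (P : Matrix (Fin M) (Fin M) ℝ) (hP : Pᵀ = P)
    (A : Matrix (Fin M) (Fin n) ℝ) (v : Fin M → ℝ) (x : Fin n → ℝ) (a : ℝ) :
    Matrix.trace ((A - a • Matrix.vecMulVec v x)ᵀ * P * (A - a • Matrix.vecMulVec v x))
      = Matrix.trace (Aᵀ * P * A) - 2 * a * (((Aᵀ * P) *ᵥ v) ⬝ᵥ x)
        + a ^ 2 * (v ⬝ᵥ P *ᵥ v) * (x ⬝ᵥ x) := by
  have hc2 : Matrix.trace ((Matrix.vecMulVec v x)ᵀ * P * A) = ((Aᵀ * P) *ᵥ v) ⬝ᵥ x := by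
    rw [← Matrix.trace_transpose, Matrix.transpose_mul, Matrix.transpose_mul,
      Matrix.transpose_transpose, ← Matrix.mul_assoc, hP, adaptive_trace_cross]
  simp only [Matrix.transpose_sub, Matrix.transpose_smul, Matrix.sub_mul, Matrix.mul_sub,
    Matrix.smul_mul, Matrix.mul_smul, Matrix.trace_sub, Matrix.trace_smul, smul_smul,
    smul_eq_mul]
  rw [adaptive_trace_cross, adaptive_trace_quad, hc2]
  ring

private lemma adaptive_psd_trace_nonneg {k : ℕ} {B : Matrix (Fin k) (Fin k) ℝ}
    (hB : B.PosSemidef) : 0 ≤ B.trace := by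
  have h : ∀ i, 0 ≤ B i i := by
    intro i
    exact hB.diag_nonneg
  exact Finset.sum_nonneg fun i _ => h i

private lemma adaptive_dot_mulVec_dot {p q : ℕ} (B : Matrix (Fin p) (Fin q) ℝ)
    (v : Fin q → ℝ) (x : Fin p → ℝ) : (B *ᵥ v) ⬝ᵥ x = v ⬝ᵥ (Bᵀ *ᵥ x) := by
  rw [dotProduct_comm, Matrix.dotProduct_mulVec, dotProduct_comm,
    Matrix.mulVec_transpose]

private lemma adaptive_quad_bound (hM : 0 < M) (A : Matrix (Fin M) (Fin M) ℝ)
    (h : ∀ x : Fin M → ℝ, x ≠ 0 →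
      (∑ i, x i * (A.mulVec x) i) < 2 * ∑ i, x i * x i) :
    ∃ c : ℝ, c < 2 ∧ ∀ x : Fin M → ℝ, x ⬝ᵥ A *ᵥ x ≤ c * (x ⬝ᵥ x) := by
  classical
  set S : Set (Fin M → ℝ) := {x | x ⬝ᵥ x = 1} with hSdef
  have hcont : ∀ B : Matrix (Fin M) (Fin M) ℝ,
      Continuous fun x : Fin M → ℝ => x ⬝ᵥ B *ᵥ x := by
    intro B
    have : (fun x : Fin M → ℝ => x ⬝ᵥ B *ᵥ x)
        = fun x => ∑ i, x i * ∑ j, B i j * x j := rfl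
    rw [this]
    exact continuous_finset_sum _ fun i _ => (continuous_apply i).mul
      (continuous_finset_sum _ fun j _ => continuous_const.mul (continuous_apply j))
  have hdotcont : Continuous fun x : Fin M → ℝ => x ⬝ᵥ x := by
    have : (fun x : Fin M → ℝ => x ⬝ᵥ x) = fun x => ∑ i, x i * x i := rfl
    rw [this]
    exact continuous_finset_sum _ fun i _ => (continuous_apply i).mul (continuous_apply i)
  have hclosed : IsClosed S := isClosed_eq hdotcont continuous_const
  have hsub : S ⊆ Metric.closedBall 0 1 := by
    intro x hx
    rw [Metric.mem_closedBall, dist_zero_right]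
    rw [pi_norm_le_iff_of_nonneg zero_le_one]
    intro i
    rw [Real.norm_eq_abs, abs_le_one_iff_mul_self_le_one]
    have h2 : x i * x i ≤ ∑ j, x j * x j :=
      Finset.single_le_sum (fun j _ => mul_self_nonneg (x j)) (Finset.mem_univ i)
    have hx1 : (∑ j, x j * x j) = 1 := hx
    linarith
  have hcomp : IsCompact S :=
    (isCompact_closedBall (0 : Fin M → ℝ) 1).of_isClosed_subset hclosed hsub
  have hne : S.Nonempty := by
    have i0 : Fin M := ⟨0, hM⟩
    refine ⟨Pi.single i0 1, ?_⟩
    have h1 : Pi.single i0 (1:ℝ) ⬝ᵥ Pi.single i0 1 = 1 := by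
      rw [dotProduct_single]; simp
    exact h1
  obtain ⟨z, hzS, hz'⟩ := hcomp.exists_isMaxOn hne (hcont A).continuousOn
  have hz : ∀ y ∈ S, y ⬝ᵥ A *ᵥ y ≤ z ⬝ᵥ A *ᵥ z := fun y hy => hz' hy
  refine ⟨z ⬝ᵥ A *ᵥ z, ?_, ?_⟩
  · have hzz : z ⬝ᵥ z = 1 := hzS
    have hz0 : z ≠ 0 := by
      intro h0
      rw [h0] at hzz
      simp [zero_dotProduct] at hzz
    have := h z hz0
    have hz1 : (∑ i, z i * z i) = 1 := hzz
    have heq : z ⬝ᵥ A *ᵥ z = ∑ i, z i * (A.mulVec z) i := rfl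
    rw [heq]
    rw [hz1] at this
    linarith
  · intro x
    by_cases hx0 : x = 0
    · subst hx0
      simp [zero_dotProduct, Matrix.mulVec_zero]
    · have hxx : 0 < x ⬝ᵥ x := adaptive_dot_self_pos hx0
      set r : ℝ := Real.sqrt (x ⬝ᵥ x) with hrdef
      have hr : 0 < r := Real.sqrt_pos.mpr hxx
      have hr2 : r ^ 2 = x ⬝ᵥ x := Real.sq_sqrt hxx.le
      have huS : (r⁻¹ • x) ∈ S := by
        show (r⁻¹ • x) ⬝ᵥ (r⁻¹ • x) = 1
        rw [smul_dotProduct, dotProduct_smul]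
        field_simp
        rw [← hr2]; simp only [smul_eq_mul]; field_simp
      have hu := hz _ huS
      have hexp : (r⁻¹ • x) ⬝ᵥ A *ᵥ (r⁻¹ • x) = r⁻¹ * (r⁻¹ * (x ⬝ᵥ A *ᵥ x)) := by
        rw [Matrix.mulVec_smul, smul_dotProduct, dotProduct_smul]
        simp [smul_eq_mul]
      rw [hexp] at hu
      have hr2' : r * r = x ⬝ᵥ x := by rw [← hr2]; ring
      calc x ⬝ᵥ A *ᵥ x = (r * r) * (r⁻¹ * (r⁻¹ * (x ⬝ᵥ A *ᵥ x))) := by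
            field_simp
          _ ≤ (r * r) * (z ⬝ᵥ A *ᵥ z) := by
            apply mul_le_mul_of_nonneg_left hu (by positivity)
          _ = (z ⬝ᵥ A *ᵥ z) * (x ⬝ᵥ x) := by rw [hr2']; ring

private lemma adaptive_rowsq_bound {p q : ℕ} (B : Matrix (Fin p) (Fin q) ℝ) (e : Fin q → ℝ) :
    ∑ j, ((B *ᵥ e) j) ^ 2 ≤ (∑ j, ∑ i, B j i ^ 2) * (e ⬝ᵥ e) := by
  have h : ∀ j, ((B *ᵥ e) j) ^ 2 ≤ (∑ i, B j i ^ 2) * (e ⬝ᵥ e) := by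
    intro j
    have := Finset.sum_mul_sq_le_sq_mul_sq Finset.univ (fun i => B j i) e
    have heq : (B *ᵥ e) j = ∑ i, B j i * e i := rfl
    have heq2 : e ⬝ᵥ e = ∑ i, e i ^ 2 := by
      simp [dotProduct, sq]
    rw [heq, heq2]
    simpa using this
  calc ∑ j, ((B *ᵥ e) j) ^ 2 ≤ ∑ j, (∑ i, B j i ^ 2) * (e ⬝ᵥ e) :=
        Finset.sum_le_sum fun j _ => h j
    _ = (∑ j, ∑ i, B j i ^ 2) * (e ⬝ᵥ e) := by rw [Finset.sum_mul]

private lemma adaptive_sum_factor {p q : ℕ} (a : ℝ) (f : Fin p → ℝ) (g : Fin q → ℝ) :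
    ∑ i, ∑ j, a * (f j ^ 2 * g i ^ 2) = a * ((∑ j, f j ^ 2) * ∑ i, g i ^ 2) := by
  have h1 : ∀ i, ∑ j, a * (f j ^ 2 * g i ^ 2) = (a * (∑ j, f j ^ 2)) * g i ^ 2 := by
    intro i
    calc ∑ j, a * (f j ^ 2 * g i ^ 2) = ∑ j, (a * g i ^ 2) * f j ^ 2 := by
          apply Finset.sum_congr rfl; intros; ring
      _ = (a * g i ^ 2) * ∑ j, f j ^ 2 := (Finset.mul_sum _ _ _).symm
      _ = (a * (∑ j, f j ^ 2)) * g i ^ 2 := by ring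
  calc ∑ i, ∑ j, a * (f j ^ 2 * g i ^ 2) = ∑ i, (a * (∑ j, f j ^ 2)) * g i ^ 2 :=
        Finset.sum_congr rfl fun i _ => h1 i
    _ = (a * (∑ j, f j ^ 2)) * ∑ i, g i ^ 2 := (Finset.mul_sum _ _ _).symm
    _ = a * ((∑ j, f j ^ 2) * ∑ i, g i ^ 2) := by ring

private lemma adaptive_sum_factor' {p q : ℕ} (a : ℝ) (f : Fin p → ℝ) (g : Fin q → ℝ) :
    ∑ i, ∑ j, a * (f i ^ 2 * g j ^ 2) = a * ((∑ i, f i ^ 2) * ∑ j, g j ^ 2) := by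
  have h1 : ∀ i, ∑ j, a * (f i ^ 2 * g j ^ 2) = (a * f i ^ 2) * ∑ j, g j ^ 2 := by
    intro i
    calc ∑ j, a * (f i ^ 2 * g j ^ 2) = ∑ j, (a * f i ^ 2) * g j ^ 2 := by
          apply Finset.sum_congr rfl; intros; ring
      _ = (a * f i ^ 2) * ∑ j, g j ^ 2 := (Finset.mul_sum _ _ _).symm
  calc ∑ i, ∑ j, a * (f i ^ 2 * g j ^ 2) = ∑ i, (a * f i ^ 2) * ∑ j, g j ^ 2 :=
        Finset.sum_congr rfl fun i _ => h1 i
    _ = ∑ i, ((∑ j, g j ^ 2) * a) * f i ^ 2 := by apply Finset.sum_congr rfl; intros; ring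
    _ = ((∑ j, g j ^ 2) * a) * ∑ i, f i ^ 2 := (Finset.mul_sum _ _ _).symm
    _ = a * ((∑ i, f i ^ 2) * ∑ j, g j ^ 2) := by ring

end Aux

set_option maxHeartbeats 1000000

/-- MIMO discrete-time adaptive laws (Lemma 3.1 (iii), discrete-time case):
the parameter increments `Θ(t+1) − Θ(t)` and `Ψ(t+1) − Ψ(t)` are
square-summable in the Frobenius norm. -/
theorem mimo_discrete_adaptive_law_increments_L2
    (N M : ℕ) (hN : 0 < N) (hM : 0 < M)
    (ζ : ℕ → Fin N → ℝ) (ξ : ℕ → Fin M → ℝ)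
    (m : ℕ → ℝ)
    (hm : ∀ t, m t = Real.sqrt (1 + (∑ i, ζ t i * ζ t i) + ∑ j, ξ t j * ξ t j))
    (Kp Sp : Matrix (Fin M) (Fin M) ℝ) (hSp : IsUnit Sp.det)
    (hKS : (Kp * Sp).PosDef)
    (hKS2 : ∀ x : Fin M → ℝ, x ≠ 0 →
      (∑ i, x i * ((Kp * Sp).mulVec x) i) < 2 * ∑ i, x i * x i)
    (Γ : Matrix (Fin M) (Fin M) ℝ) (hΓ : Γ.PosDef)
    (hΓ2 : ∀ x : Fin M → ℝ, x ≠ 0 →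
      (∑ i, x i * (Γ.mulVec x) i) < 2 * ∑ i, x i * x i)
    (Θs : Matrix (Fin N) (Fin M) ℝ)
    (Θ : ℕ → Matrix (Fin N) (Fin M) ℝ) (Ψ : ℕ → Matrix (Fin M) (Fin M) ℝ)
    (ε : ℕ → Fin M → ℝ)
    (hε : ∀ t, ε t = Kp.mulVec ((Θ t - Θs)ᵀ.mulVec (ζ t)) + (Ψ t - Kp).mulVec (ξ t))
    (hΘlaw : ∀ t, (Θ (t + 1))ᵀ =
      (Θ t)ᵀ - (m t ^ 2)⁻¹ • Matrix.vecMulVec (Sp.mulVec (ε t)) (ζ t))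
    (hΨlaw : ∀ t, Ψ (t + 1) =
      Ψ t - (m t ^ 2)⁻¹ • Matrix.vecMulVec (Γ.mulVec (ε t)) (ξ t)) :
    Summable (fun t => ∑ i, ∑ j, (Θ (t + 1) i j - Θ t i j) ^ 2) ∧
    Summable (fun t => ∑ i, ∑ j, (Ψ (t + 1) i j - Ψ t i j) ^ 2) := by
  classical
  -- basic facts about m
  have hζζ : ∀ t, (0:ℝ) ≤ ∑ i, ζ t i * ζ t i := fun t =>
    Finset.sum_nonneg (fun i _ => mul_self_nonneg _)
  have hξξ : ∀ t, (0:ℝ) ≤ ∑ j, ξ t j * ξ t j := fun t =>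
    Finset.sum_nonneg (fun j _ => mul_self_nonneg _)
  have hmsq : ∀ t, m t ^ 2 = 1 + (∑ i, ζ t i * ζ t i) + ∑ j, ξ t j * ξ t j := by
    intro t
    have h1 : (0:ℝ) ≤ 1 + (∑ i, ζ t i * ζ t i) + ∑ j, ξ t j * ξ t j := by
      have := hζζ t; have := hξξ t; linarith
    rw [hm t, Real.sq_sqrt h1]
  have hm1 : ∀ t, (1:ℝ) ≤ m t ^ 2 := by
    intro t; rw [hmsq t]; have := hζζ t; have := hξξ t; linarith
  have hmpos : ∀ t, (0:ℝ) < m t ^ 2 := fun t => lt_of_lt_of_le one_pos (hm1 t)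
  -- symmetric matrices
  have hΓsymm : Γᵀ = Γ := by
    ext i j
    have := congrFun (congrFun hΓ.1 i) j
    simpa [Matrix.conjTranspose_apply] using this
  have hKSsymm : (Kp * Sp)ᵀ = Kp * Sp := by
    ext i j
    have := congrFun (congrFun hKS.1 i) j
    simpa [Matrix.conjTranspose_apply] using this
  have hSpT : IsUnit (Spᵀ).det := by rwa [Matrix.det_transpose]
  have hΓu : IsUnit Γ.det := hΓ.det_pos.ne'.isUnit
  -- the Lyapunov matrices
  set P : Matrix (Fin M) (Fin M) ℝ := (Spᵀ)⁻¹ * (Kp * Sp) * Sp⁻¹ with hPdef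
  set Q : Matrix (Fin M) (Fin M) ℝ := Γ⁻¹ with hQdef
  have hPsymm : Pᵀ = P := by
    have h1 : Pᵀ = (Sp⁻¹)ᵀ * ((Kp * Sp)ᵀ * ((Spᵀ)⁻¹)ᵀ) := by
      rw [hPdef, Matrix.transpose_mul, Matrix.transpose_mul]
    rw [h1, hKSsymm, Matrix.transpose_nonsing_inv, Matrix.transpose_nonsing_inv,
      Matrix.transpose_transpose, ← Matrix.mul_assoc]
  have hQsymm : Qᵀ = Q := by
    rw [hQdef, Matrix.transpose_nonsing_inv, hΓsymm]
  have hSpKp : Spᵀ * P = Kp := by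
    rw [hPdef, ← Matrix.mul_assoc, ← Matrix.mul_assoc, Matrix.mul_nonsing_inv _ hSpT,
      Matrix.one_mul, Matrix.mul_assoc, Matrix.mul_nonsing_inv _ hSp, Matrix.mul_one]
  have hΓQ : Γᵀ * Q = 1 := by rw [hΓsymm, hQdef, Matrix.mul_nonsing_inv _ hΓu]
  -- positive semidefiniteness of P and Q
  have hPpsd : P.PosSemidef := by
    have h1 : P = (Sp⁻¹)ᴴ * (Kp * Sp) * Sp⁻¹ := by
      rw [hPdef, Matrix.conjTranspose_eq_transpose_of_trivial, Matrix.transpose_nonsing_inv]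
    rw [h1]
    exact hKS.posSemidef.conjTranspose_mul_mul_same _
  have hQpsd : Q.PosSemidef := hΓ.posSemidef.inv
  -- abbreviations
  set U : ℕ → Matrix (Fin M) (Fin N) ℝ := fun t => (Θ t - Θs)ᵀ with hUdef
  set W : ℕ → Matrix (Fin M) (Fin M) ℝ := fun t => Ψ t - Kp with hWdef
  set V : ℕ → ℝ := fun t =>
    Matrix.trace ((U t)ᵀ * P * U t) + Matrix.trace ((W t)ᵀ * Q * W t) with hVdef
  have hVnonneg : ∀ t, 0 ≤ V t := by
    intro t
    have h1 : ((U t)ᵀ * P * U t).PosSemidef := by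
      have := hPpsd.conjTranspose_mul_mul_same (U t)
      rwa [Matrix.conjTranspose_eq_transpose_of_trivial] at this
    have h2 : ((W t)ᵀ * Q * W t).PosSemidef := by
      have := hQpsd.conjTranspose_mul_mul_same (W t)
      rwa [Matrix.conjTranspose_eq_transpose_of_trivial] at this
    exact add_nonneg (adaptive_psd_trace_nonneg h1) (adaptive_psd_trace_nonneg h2)
  -- recursions
  have hUrec : ∀ t, U (t + 1) = U t - (m t ^ 2)⁻¹ • Matrix.vecMulVec (Sp *ᵥ ε t) (ζ t) := by
    intro t
    show (Θ (t+1) - Θs)ᵀ = (Θ t - Θs)ᵀ - (m t ^ 2)⁻¹ • Matrix.vecMulVec (Sp *ᵥ ε t) (ζ t)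
    rw [Matrix.transpose_sub, Matrix.transpose_sub, hΘlaw t]
    abel
  have hWrec : ∀ t, W (t + 1) = W t - (m t ^ 2)⁻¹ • Matrix.vecMulVec (Γ *ᵥ ε t) (ξ t) := by
    intro t
    show Ψ (t+1) - Kp = Ψ t - Kp - (m t ^ 2)⁻¹ • Matrix.vecMulVec (Γ *ᵥ ε t) (ξ t)
    rw [hΨlaw t]
    abel
  have hεid : ∀ t, ε t = Kp *ᵥ (U t *ᵥ ζ t) + W t *ᵥ ξ t := fun t => hε t
  -- the uniform quadratic-form bound
  obtain ⟨c, hc0, hc2, hcb1, hcb2⟩ : ∃ c : ℝ, 0 ≤ c ∧ c < 2 ∧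
      (∀ x : Fin M → ℝ, x ⬝ᵥ (Kp * Sp) *ᵥ x ≤ c * (x ⬝ᵥ x)) ∧
      (∀ x : Fin M → ℝ, x ⬝ᵥ Γ *ᵥ x ≤ c * (x ⬝ᵥ x)) := by
    obtain ⟨c₁, hc₁2, hc₁⟩ := adaptive_quad_bound hM (Kp * Sp) hKS2
    obtain ⟨c₂, hc₂2, hc₂⟩ := adaptive_quad_bound hM Γ hΓ2
    refine ⟨max (max c₁ c₂) 0, le_max_right _ _, max_lt (max_lt hc₁2 hc₂2) two_pos, ?_, ?_⟩
    · intro x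
      refine le_trans (hc₁ x) (mul_le_mul_of_nonneg_right
        (le_trans (le_max_left _ _) (le_max_left _ _)) (adaptive_dot_self_nonneg x))
    · intro x
      refine le_trans (hc₂ x) (mul_le_mul_of_nonneg_right
        (le_trans (le_max_right _ _) (le_max_left _ _)) (adaptive_dot_self_nonneg x))
  -- the one-step decrease of V
  set s : ℕ → ℝ := fun t => (m t ^ 2)⁻¹ * (ε t ⬝ᵥ ε t) with hsdef
  have hsnn : ∀ t, 0 ≤ s t := fun t =>
    mul_nonneg (inv_nonneg.mpr (hmpos t).le) (adaptive_dot_self_nonneg _)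
  have hstep : ∀ t, V (t + 1) ≤ V t - (2 - c) * s t := by
    intro t
    set a : ℝ := (m t ^ 2)⁻¹ with hadef
    have hapos : 0 < a := inv_pos.mpr (hmpos t)
    -- expansion of the two trace terms
    have e1 : Matrix.trace ((U (t+1))ᵀ * P * U (t+1))
        = Matrix.trace ((U t)ᵀ * P * U t)
          - 2 * a * ((((U t)ᵀ * P) *ᵥ (Sp *ᵥ ε t)) ⬝ᵥ ζ t)
          + a ^ 2 * ((Sp *ᵥ ε t) ⬝ᵥ P *ᵥ (Sp *ᵥ ε t)) * (ζ t ⬝ᵥ ζ t) := by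
      rw [hUrec t]; exact adaptive_trace_expand P hPsymm _ _ _ _
    have e2 : Matrix.trace ((W (t+1))ᵀ * Q * W (t+1))
        = Matrix.trace ((W t)ᵀ * Q * W t)
          - 2 * a * ((((W t)ᵀ * Q) *ᵥ (Γ *ᵥ ε t)) ⬝ᵥ ξ t)
          + a ^ 2 * ((Γ *ᵥ ε t) ⬝ᵥ Q *ᵥ (Γ *ᵥ ε t)) * (ξ t ⬝ᵥ ξ t) := by
      rw [hWrec t]; exact adaptive_trace_expand Q hQsymm _ _ _ _
    -- cross terms
    have cross1 : (((U t)ᵀ * P) *ᵥ (Sp *ᵥ ε t)) ⬝ᵥ ζ t = ε t ⬝ᵥ (Kp *ᵥ (U t *ᵥ ζ t)) := by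
      rw [Matrix.mulVec_mulVec, adaptive_dot_mulVec_dot, Matrix.transpose_mul,
        Matrix.transpose_mul, Matrix.transpose_transpose, hPsymm, ← Matrix.mul_assoc,
        hSpKp, ← Matrix.mulVec_mulVec]
    have cross2 : (((W t)ᵀ * Q) *ᵥ (Γ *ᵥ ε t)) ⬝ᵥ ξ t = ε t ⬝ᵥ (W t *ᵥ ξ t) := by
      rw [Matrix.mulVec_mulVec, adaptive_dot_mulVec_dot, Matrix.transpose_mul,
        Matrix.transpose_mul, Matrix.transpose_transpose, hQsymm, ← Matrix.mul_assoc,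
        hΓQ, Matrix.one_mul]
    -- quadratic terms
    have quad1 : (Sp *ᵥ ε t) ⬝ᵥ P *ᵥ (Sp *ᵥ ε t) = ε t ⬝ᵥ (Kp * Sp) *ᵥ ε t := by
      rw [Matrix.mulVec_mulVec, adaptive_dot_mulVec_dot, Matrix.mulVec_mulVec,
        ← Matrix.mul_assoc, hSpKp]
    have quad2 : (Γ *ᵥ ε t) ⬝ᵥ Q *ᵥ (Γ *ᵥ ε t) = ε t ⬝ᵥ Γ *ᵥ ε t := by
      rw [Matrix.mulVec_mulVec, adaptive_dot_mulVec_dot, Matrix.mulVec_mulVec,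
        ← Matrix.mul_assoc, hΓQ, Matrix.one_mul]
    -- the cross terms sum to ε ⬝ ε
    have hcross : ε t ⬝ᵥ (Kp *ᵥ (U t *ᵥ ζ t)) + ε t ⬝ᵥ (W t *ᵥ ξ t) = ε t ⬝ᵥ ε t := by
      rw [← dotProduct_add, ← hεid t]
    -- assemble
    have hVt1 : V (t+1) = V t - 2 * a * (ε t ⬝ᵥ ε t)
        + a ^ 2 * ((ε t ⬝ᵥ (Kp * Sp) *ᵥ ε t) * (ζ t ⬝ᵥ ζ t)
          + (ε t ⬝ᵥ Γ *ᵥ ε t) * (ξ t ⬝ᵥ ξ t)) := by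
      rw [hVdef]
      simp only []
      rw [e1, e2, cross1, cross2, quad1, quad2]
      rw [← hcross]
      ring
    -- bound the quadratic correction
    set d : ℝ := ε t ⬝ᵥ ε t with hddef
    have hdnn : 0 ≤ d := adaptive_dot_self_nonneg _
    set z1 : ℝ := ζ t ⬝ᵥ ζ t with hz1def
    set z2 : ℝ := ξ t ⬝ᵥ ξ t with hz2def
    have hz1nn : 0 ≤ z1 := adaptive_dot_self_nonneg _
    have hz2nn : 0 ≤ z2 := adaptive_dot_self_nonneg _
    have hq1 : ε t ⬝ᵥ (Kp * Sp) *ᵥ ε t ≤ c * d := hcb1 (ε t)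
    have hq2 : ε t ⬝ᵥ Γ *ᵥ ε t ≤ c * d := hcb2 (ε t)
    have hmz : z1 + z2 = m t ^ 2 - 1 := by
      have : z1 = ∑ i, ζ t i * ζ t i := rfl
      have h2 : z2 = ∑ j, ξ t j * ξ t j := rfl
      rw [this, h2, hmsq t]; ring
    have hkey : a ^ 2 * ((ε t ⬝ᵥ (Kp * Sp) *ᵥ ε t) * z1 + (ε t ⬝ᵥ Γ *ᵥ ε t) * z2)
        ≤ c * a * d := by
      have h1 : (ε t ⬝ᵥ (Kp * Sp) *ᵥ ε t) * z1 ≤ (c * d) * z1 :=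
        mul_le_mul_of_nonneg_right hq1 hz1nn
      have h2 : (ε t ⬝ᵥ Γ *ᵥ ε t) * z2 ≤ (c * d) * z2 :=
        mul_le_mul_of_nonneg_right hq2 hz2nn
      have h3 : (ε t ⬝ᵥ (Kp * Sp) *ᵥ ε t) * z1 + (ε t ⬝ᵥ Γ *ᵥ ε t) * z2
          ≤ (c * d) * (m t ^ 2) := by
        have h4 : (c * d) * z1 + (c * d) * z2 = (c * d) * (m t ^ 2 - 1) := by
          rw [← hmz]; ring
        have h5 : (c * d) * (m t ^ 2 - 1) ≤ (c * d) * (m t ^ 2) := by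
          have : (0:ℝ) ≤ c * d := mul_nonneg hc0 hdnn
          nlinarith
        linarith
      have h6 : a ^ 2 * ((ε t ⬝ᵥ (Kp * Sp) *ᵥ ε t) * z1 + (ε t ⬝ᵥ Γ *ᵥ ε t) * z2)
          ≤ a ^ 2 * ((c * d) * (m t ^ 2)) :=
        mul_le_mul_of_nonneg_left h3 (sq_nonneg a)
      have hmne : (m t ^ 2) ≠ 0 := (hmpos t).ne'
      have h7 : a ^ 2 * ((c * d) * (m t ^ 2)) = c * a * d := by
        rw [hadef]
        field_simp
      linarith
    have hs_eq : s t = a * d := rfl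
    rw [hVt1, hs_eq]
    linarith [hkey]
  -- summability of s
  have h2c : (0:ℝ) < 2 - c := by linarith
  have hVsum : ∀ n : ℕ, ∑ t ∈ Finset.range n, s t ≤ V 0 / (2 - c) := by
    intro n
    have htel : ∑ t ∈ Finset.range n, (V t - V (t + 1)) = V 0 - V n :=
      Finset.sum_range_sub' V n
    have h1 : (2 - c) * ∑ t ∈ Finset.range n, s t ≤ V 0 := by
      have h2 : ∀ t ∈ Finset.range n, (2 - c) * s t ≤ V t - V (t + 1) := by
        intro t _
        have := hstep t
        linarith
      calc (2 - c) * ∑ t ∈ Finset.range n, s t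
          = ∑ t ∈ Finset.range n, (2 - c) * s t := by rw [Finset.mul_sum]
        _ ≤ ∑ t ∈ Finset.range n, (V t - V (t + 1)) := Finset.sum_le_sum h2
        _ = V 0 - V n := htel
        _ ≤ V 0 := by have := hVnonneg n; linarith
    rw [le_div_iff₀ h2c]
    linarith [h1]
  have hs_sum : Summable s := summable_of_sum_range_le hsnn hVsum
  -- conclude for Θ
  constructor
  · set CS : ℝ := ∑ j, ∑ i, Sp j i ^ 2 with hCSdef
    have hCSnn : 0 ≤ CS := Finset.sum_nonneg fun j _ =>
      Finset.sum_nonneg fun i _ => sq_nonneg _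
    have hentry : ∀ t i j, Θ (t+1) i j - Θ t i j
        = -((m t ^ 2)⁻¹ * ((Sp *ᵥ ε t) j * ζ t i)) := by
      intro t i j
      have := congrFun (congrFun (hΘlaw t) j) i
      simp only [Matrix.transpose_apply, Matrix.sub_apply, Matrix.smul_apply,
        Matrix.vecMulVec_apply, smul_eq_mul] at this
      linarith
    have hbound : ∀ t, (∑ i, ∑ j, (Θ (t + 1) i j - Θ t i j) ^ 2) ≤ CS * s t := by
      intro t
      have heq : (∑ i, ∑ j, (Θ (t + 1) i j - Θ t i j) ^ 2)
          = (m t ^ 2)⁻¹ ^ 2 * ((∑ j, ((Sp *ᵥ ε t) j) ^ 2) * ∑ i, ζ t i ^ 2) := by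
        have hstep1 : (∑ i, ∑ j, (Θ (t + 1) i j - Θ t i j) ^ 2)
            = ∑ i, ∑ j, (m t ^ 2)⁻¹ ^ 2 * (((Sp *ᵥ ε t) j) ^ 2 * ζ t i ^ 2) := by
          apply Finset.sum_congr rfl
          intro i _
          apply Finset.sum_congr rfl
          intro j _
          rw [hentry t i j]
          ring
        rw [hstep1, adaptive_sum_factor]
      rw [heq]
      have h1 : (∑ j, ((Sp *ᵥ ε t) j) ^ 2) ≤ CS * (ε t ⬝ᵥ ε t) :=
        adaptive_rowsq_bound Sp (ε t)
      have h2 : (∑ i, ζ t i ^ 2) ≤ m t ^ 2 := by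
        have : (∑ i, ζ t i ^ 2) = ∑ i, ζ t i * ζ t i := by
          apply Finset.sum_congr rfl; intro i _; ring
        rw [this, hmsq t]
        have := hξξ t; linarith
      have h3 : (0:ℝ) ≤ ∑ j, ((Sp *ᵥ ε t) j) ^ 2 :=
        Finset.sum_nonneg fun j _ => sq_nonneg _
      have h4 : (∑ j, ((Sp *ᵥ ε t) j) ^ 2) * (∑ i, ζ t i ^ 2)
          ≤ (CS * (ε t ⬝ᵥ ε t)) * (m t ^ 2) := by
        apply mul_le_mul h1 h2 (Finset.sum_nonneg fun i _ => sq_nonneg _)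
        exact mul_nonneg hCSnn (adaptive_dot_self_nonneg _)
      have hmne : (m t ^ 2) ≠ 0 := (hmpos t).ne'
      have h5 : (m t ^ 2)⁻¹ ^ 2 * ((CS * (ε t ⬝ᵥ ε t)) * (m t ^ 2)) = CS * s t := by
        show (m t ^ 2)⁻¹ ^ 2 * ((CS * (ε t ⬝ᵥ ε t)) * (m t ^ 2))
          = CS * ((m t ^ 2)⁻¹ * (ε t ⬝ᵥ ε t))
        field_simp
      calc (m t ^ 2)⁻¹ ^ 2 * ((∑ j, ((Sp *ᵥ ε t) j) ^ 2) * ∑ i, ζ t i ^ 2)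
          ≤ (m t ^ 2)⁻¹ ^ 2 * ((CS * (ε t ⬝ᵥ ε t)) * (m t ^ 2)) :=
            mul_le_mul_of_nonneg_left h4 (sq_nonneg _)
        _ = CS * s t := h5
    refine Summable.of_nonneg_of_le ?_ hbound (hs_sum.mul_left CS)
    intro t
    exact Finset.sum_nonneg fun i _ => Finset.sum_nonneg fun j _ => sq_nonneg _
  · set CG : ℝ := ∑ j, ∑ i, Γ j i ^ 2 with hCGdef
    have hCGnn : 0 ≤ CG := Finset.sum_nonneg fun j _ =>
      Finset.sum_nonneg fun i _ => sq_nonneg _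
    have hentry : ∀ t i j, Ψ (t+1) i j - Ψ t i j
        = -((m t ^ 2)⁻¹ * ((Γ *ᵥ ε t) i * ξ t j)) := by
      intro t i j
      have := congrFun (congrFun (hΨlaw t) i) j
      simp only [Matrix.sub_apply, Matrix.smul_apply,
        Matrix.vecMulVec_apply, smul_eq_mul] at this
      linarith
    have hbound : ∀ t, (∑ i, ∑ j, (Ψ (t + 1) i j - Ψ t i j) ^ 2) ≤ CG * s t := by
      intro t
      have heq : (∑ i, ∑ j, (Ψ (t + 1) i j - Ψ t i j) ^ 2)
          = (m t ^ 2)⁻¹ ^ 2 * ((∑ i, ((Γ *ᵥ ε t) i) ^ 2) * ∑ j, ξ t j ^ 2) := by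
        have hstep1 : (∑ i, ∑ j, (Ψ (t + 1) i j - Ψ t i j) ^ 2)
            = ∑ i, ∑ j, (m t ^ 2)⁻¹ ^ 2 * (((Γ *ᵥ ε t) i) ^ 2 * ξ t j ^ 2) := by
          apply Finset.sum_congr rfl
          intro i _
          apply Finset.sum_congr rfl
          intro j _
          rw [hentry t i j]
          ring
        rw [hstep1, adaptive_sum_factor']
      rw [heq]
      have h1 : (∑ i, ((Γ *ᵥ ε t) i) ^ 2) ≤ CG * (ε t ⬝ᵥ ε t) :=
        adaptive_rowsq_bound Γ (ε t)
      have h2 : (∑ j, ξ t j ^ 2) ≤ m t ^ 2 := by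
        have : (∑ j, ξ t j ^ 2) = ∑ j, ξ t j * ξ t j := by
          apply Finset.sum_congr rfl; intro j _; ring
        rw [this, hmsq t]
        have := hζζ t; linarith
      have h4 : (∑ i, ((Γ *ᵥ ε t) i) ^ 2) * (∑ j, ξ t j ^ 2)
          ≤ (CG * (ε t ⬝ᵥ ε t)) * (m t ^ 2) := by
        apply mul_le_mul h1 h2 (Finset.sum_nonneg fun j _ => sq_nonneg _)
        exact mul_nonneg hCGnn (adaptive_dot_self_nonneg _)
      have hmne : (m t ^ 2) ≠ 0 := (hmpos t).ne'
      have h5 : (m t ^ 2)⁻¹ ^ 2 * ((CG * (ε t ⬝ᵥ ε t)) * (m t ^ 2)) = CG * s t := by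
        show (m t ^ 2)⁻¹ ^ 2 * ((CG * (ε t ⬝ᵥ ε t)) * (m t ^ 2))
          = CG * ((m t ^ 2)⁻¹ * (ε t ⬝ᵥ ε t))
        field_simp
      calc (m t ^ 2)⁻¹ ^ 2 * ((∑ i, ((Γ *ᵥ ε t) i) ^ 2) * ∑ j, ξ t j ^ 2)
          ≤ (m t ^ 2)⁻¹ ^ 2 * ((CG * (ε t ⬝ᵥ ε t)) * (m t ^ 2)) :=
            mul_le_mul_of_nonneg_left h4 (sq_nonneg _)
        _ = CG * s t := h5
    refine Summable.of_nonneg_of_le ?_ hbound (hs_sum.mul_left CG)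
    intro t
    exact Finset.sum_nonneg fun i _ => Finset.sum_nonneg fun j _ => sq_nonneg _
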